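/- Let W ⊆ ℂ be open, let α, g : W → ℂ be holomorphic, and let c ∈ ℂ be such that α(z) + c ≠ 0 for all z ∈ W. For each non-negative integer k, define holomorphic functions c_{k,l} : W → ℂ (0 ≤ l ≤ k) by the requirement that for every real t > 0 and z ∈ W, ∂_z^k (t^{α(z)} g(z)) = Σ_{l=0}^{k} c_{k,l}(z) · t^{α(z)} (log t)^l. (These are uniquely determined; explicitly c_{0,0} = g, c_{k+1,k+1} = α' · c_{k,k}, c_{k+1,l} = α' · c_{k,l−1} + c_{k,l}' for 1 ≤ l ≤ k, and c_{k+1,0} = c_{k,0}'.) Then for every k ≥ 0 and z ∈ W, d^k/dz^k ( −g(z)/(α(z) + c) ) = Σ_{l=0}^{k} ( (−1)^{l+1} l! / (α(z) + c)^{l+1} ) · c_{k,l}(z). -/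

import Mathlib

open Finset

private lemma poly_aux (n : ℕ) (a : ℕ → ℂ)
    (h : ∀ x : ℝ, ∑ l ∈ Finset.range n, a l * (x : ℂ) ^ l = 0) :
    ∀ l < n, a l = 0 := by
  have hp : (∑ l ∈ Finset.range n, Polynomial.C (a l) * Polynomial.X ^ l) = 0 := by
    apply Polynomial.eq_zero_of_infinite_isRoot
    apply (Set.infinite_range_of_injective Complex.ofReal_injective).mono
    rintro _ ⟨x, rfl⟩
    simpa [Polynomial.IsRoot, Polynomial.eval_finset_sum] using h x
  intro l hl
  have h2 := congrArg (fun p => Polynomial.coeff p l) hp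
  simp only [Polynomial.finset_sum_coeff, Polynomial.coeff_C_mul, Polynomial.coeff_X_pow,
    Polynomial.coeff_zero, mul_ite, mul_one, mul_zero] at h2
  rwa [Finset.sum_ite_eq (Finset.range n) l a, if_pos (Finset.mem_range.2 hl)] at h2

theorem stmt12 (W : Set ℂ) (hW : IsOpen W) (α g : ℂ → ℂ)
    (hα : DifferentiableOn ℂ α W) (hg : DifferentiableOn ℂ g W)
    (cconst : ℂ) (hne : ∀ z ∈ W, α z + cconst ≠ 0)
    (c : ℕ → ℕ → ℂ → ℂ)
    (hc : ∀ k, ∀ t : ℝ, 0 < t → ∀ z ∈ W,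
      iteratedDeriv k (fun w => (t : ℂ) ^ (α w) * g w) z
        = ∑ l ∈ Finset.range (k + 1), c k l z * (t : ℂ) ^ (α z) * (Real.log t : ℂ) ^ l) :
    ∀ k, ∀ z ∈ W,
      iteratedDeriv k (fun w => -(g w) / (α w + cconst)) z
        = ∑ l ∈ Finset.range (k + 1),
            ((-1 : ℂ) ^ (l + 1) * (Nat.factorial l : ℂ) / (α z + cconst) ^ (l + 1))
              * c k l z := by
  have hαat : ∀ z ∈ W, DifferentiableAt ℂ α z :=
    fun z hz => hα.differentiableAt (hW.mem_nhds hz)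
  suffices H : ∀ k, (∀ l, l ≤ k → DifferentiableOn ℂ (c k l) W) ∧
      (∀ z ∈ W, iteratedDeriv k (fun w => -(g w) / (α w + cconst)) z
        = ∑ l ∈ Finset.range (k + 1),
            ((-1 : ℂ) ^ (l + 1) * (Nat.factorial l : ℂ) / (α z + cconst) ^ (l + 1))
              * c k l z) by
    exact fun k z hz => (H k).2 z hz
  intro k
  induction k with
  | zero =>
    have hc00 : ∀ z ∈ W, c 0 0 z = g z := by
      intro z hz
      have h := hc 0 1 one_pos z hz
      simp [iteratedDeriv_zero, Complex.one_cpow] at h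
      exact h.symm
    constructor
    · intro l hl
      interval_cases l
      exact hg.congr hc00
    · intro z hz
      rw [iteratedDeriv_zero, Finset.sum_range_one, hc00 z hz]
      norm_num [Nat.factorial]
      ring
  | succ k ih =>
    obtain ⟨ihd, ihf⟩ := ih
    set B : ℕ → ℂ → ℂ := fun l w =>
      (if l ≤ k then deriv (c k l) w else 0)
        + deriv α w * (if l = 0 then 0 else c k (l - 1) w) with hBdef
    -- Step A: recurrence
    have hB : ∀ z ∈ W, ∀ l ≤ k + 1, c (k + 1) l z = B l z := by
      intro z hz
      have key : ∀ x : ℝ,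
          ∑ l ∈ Finset.range (k + 2), (c (k + 1) l z - B l z) * (x : ℂ) ^ l = 0 := by
        intro x
        set t := Real.exp x with htdef
        have ht : 0 < t := Real.exp_pos x
        have hlog : Real.log t = x := Real.log_exp x
        have hE : ∀ w : ℂ, (t : ℂ) ^ (α w) = Complex.exp ((x : ℂ) * α w) := by
          intro w
          rw [Complex.cpow_def_of_ne_zero (by exact_mod_cast ht.ne' : (t : ℂ) ≠ 0),
            ← Complex.ofReal_log ht.le, hlog]
        have h1 := hc (k + 1) t ht z hz
        simp only [hE, hlog] at h1
        have h2 : iteratedDeriv (k + 1) (fun w => (t : ℂ) ^ (α w) * g w) z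
            = ∑ l ∈ Finset.range (k + 1),
                ((deriv (c k l) z + c k l z * ((x : ℂ) * deriv α z))
                  * Complex.exp ((x : ℂ) * α z) * (x : ℂ) ^ l) := by
          rw [iteratedDeriv_succ]
          have hev : iteratedDeriv k (fun w => (t : ℂ) ^ (α w) * g w)
              =ᶠ[nhds z] fun w => ∑ l ∈ Finset.range (k + 1),
                c k l w * Complex.exp ((x : ℂ) * α w) * (x : ℂ) ^ l := by
            filter_upwards [hW.mem_nhds hz] with w hw
            rw [hc k t ht w hw]
            exact Finset.sum_congr rfl fun l _ => by rw [hE w, hlog]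
          rw [hev.deriv_eq]
          have hha : ∀ l ∈ Finset.range (k + 1),
              HasDerivAt (fun w => c k l w * Complex.exp ((x : ℂ) * α w) * (x : ℂ) ^ l)
                ((deriv (c k l) z + c k l z * ((x : ℂ) * deriv α z))
                  * Complex.exp ((x : ℂ) * α z) * (x : ℂ) ^ l) z := by
            intro l hl
            have hcl : HasDerivAt (c k l) (deriv (c k l) z) z :=
              ((ihd l (Nat.lt_succ_iff.mp (Finset.mem_range.mp hl))).differentiableAt (hW.mem_nhds hz)).hasDerivAt
            have hαz : HasDerivAt α (deriv α z) z := (hαat z hz).hasDerivAt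
            have hexp : HasDerivAt (fun w => Complex.exp ((x : ℂ) * α w))
                (Complex.exp ((x : ℂ) * α z) * ((x : ℂ) * deriv α z)) z :=
              (hαz.const_mul (x : ℂ)).cexp
            have := (hcl.fun_mul hexp).mul_const ((x : ℂ) ^ l)
            refine this.congr_deriv ?_
            ring
          rw [(HasDerivAt.fun_sum hha).deriv]
        simp only [hE] at h2
        have hEne : Complex.exp ((x : ℂ) * α z) ≠ 0 := Complex.exp_ne_zero _
        have hBsum : ∑ l ∈ Finset.range (k + 2),
            B l z * Complex.exp ((x : ℂ) * α z) * (x : ℂ) ^ l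
            = ∑ l ∈ Finset.range (k + 1),
                ((deriv (c k l) z + c k l z * ((x : ℂ) * deriv α z))
                  * Complex.exp ((x : ℂ) * α z) * (x : ℂ) ^ l) := by
          simp only [hBdef, add_mul, Finset.sum_add_distrib]
          have f1 : ∑ l ∈ Finset.range (k + 2),
              (if l ≤ k then deriv (c k l) z else 0)
                * Complex.exp ((x : ℂ) * α z) * (x : ℂ) ^ l
              = ∑ l ∈ Finset.range (k + 1),
                  deriv (c k l) z * Complex.exp ((x : ℂ) * α z) * (x : ℂ) ^ l := by
            rw [Finset.sum_range_succ, if_neg (by omega : ¬ k + 1 ≤ k), zero_mul, zero_mul,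
              add_zero]
            refine Finset.sum_congr rfl fun l hl => ?_
            rw [if_pos (Nat.lt_succ_iff.mp (Finset.mem_range.mp hl))]
          have f2 : ∑ l ∈ Finset.range (k + 2),
              (deriv α z * (if l = 0 then 0 else c k (l - 1) z))
                * Complex.exp ((x : ℂ) * α z) * (x : ℂ) ^ l
              = ∑ l ∈ Finset.range (k + 1),
                  deriv α z * c k l z * Complex.exp ((x : ℂ) * α z) * (x : ℂ) ^ (l + 1) := by
            rw [Finset.sum_range_succ']
            simp only [eq_self_iff_true, if_true, mul_zero, zero_mul, add_zero, pow_zero,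
              mul_one, Nat.succ_ne_zero, if_false, Nat.add_sub_cancel]
          rw [f1, f2]
          congr 1
          refine Finset.sum_congr rfl fun l hl => ?_
          ring
        have hzero : ∑ l ∈ Finset.range (k + 2),
            c (k + 1) l z * Complex.exp ((x : ℂ) * α z) * (x : ℂ) ^ l
            = ∑ l ∈ Finset.range (k + 2),
                B l z * Complex.exp ((x : ℂ) * α z) * (x : ℂ) ^ l := by
          rw [hBsum, ← h1, ← h2]
        have : Complex.exp ((x : ℂ) * α z)
            * ∑ l ∈ Finset.range (k + 2), (c (k + 1) l z - B l z) * (x : ℂ) ^ l = 0 := by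
          rw [Finset.mul_sum]
          have : ∀ l ∈ Finset.range (k + 2),
              Complex.exp ((x : ℂ) * α z) * ((c (k + 1) l z - B l z) * (x : ℂ) ^ l)
              = c (k + 1) l z * Complex.exp ((x : ℂ) * α z) * (x : ℂ) ^ l
                - B l z * Complex.exp ((x : ℂ) * α z) * (x : ℂ) ^ l :=
            fun l _ => by ring
          rw [Finset.sum_congr rfl this, Finset.sum_sub_distrib, hzero, sub_self]
        exact (mul_eq_zero.mp this).resolve_left hEne
      intro l hl
      have := poly_aux (k + 2) (fun l => c (k + 1) l z - B l z) key l (by omega)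
      exact sub_eq_zero.mp this
    -- Step B: differentiability of the new coefficients
    have hα'd : DifferentiableOn ℂ (deriv α) W :=
      ((hα.analyticOnNhd hW).deriv).differentiableOn
    have hBdiff : ∀ l, l ≤ k + 1 → DifferentiableOn ℂ (c (k + 1) l) W := by
      intro l hl
      refine DifferentiableOn.congr ?_ (fun z hz => hB z hz l hl)
      apply DifferentiableOn.add
      · by_cases h : l ≤ k
        · simp only [if_pos h]
          exact (((ihd l h).analyticOnNhd hW).deriv).differentiableOn
        · simp only [if_neg h]
          exact differentiableOn_const 0
      · apply DifferentiableOn.mul hα'd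
        by_cases h : l = 0
        · simp only [if_pos h]
          exact differentiableOn_const 0
        · simp only [if_neg h]
          exact ihd (l - 1) (by omega)
    refine ⟨hBdiff, ?_⟩
    -- Step C: the formula at k + 1
    intro z hz
    have hnz : α z + cconst ≠ 0 := hne z hz
    rw [iteratedDeriv_succ]
    have hev : iteratedDeriv k (fun w => -(g w) / (α w + cconst))
        =ᶠ[nhds z] fun w => ∑ l ∈ Finset.range (k + 1),
          ((-1 : ℂ) ^ (l + 1) * (Nat.factorial l : ℂ) / (α w + cconst) ^ (l + 1))
            * c k l w := by
      filter_upwards [hW.mem_nhds hz] with w hw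
      exact ihf w hw
    rw [hev.deriv_eq]
    have hha : ∀ l ∈ Finset.range (k + 1),
        HasDerivAt (fun w =>
            ((-1 : ℂ) ^ (l + 1) * (Nat.factorial l : ℂ) / (α w + cconst) ^ (l + 1)) * c k l w)
          (((0 * (α z + cconst) ^ (l + 1)
              - ((-1 : ℂ) ^ (l + 1) * (Nat.factorial l : ℂ))
                * ((l + 1 : ℕ) * (α z + cconst) ^ l * deriv α z))
              / ((α z + cconst) ^ (l + 1)) ^ 2) * c k l z
            + ((-1 : ℂ) ^ (l + 1) * (Nat.factorial l : ℂ) / (α z + cconst) ^ (l + 1))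
                * deriv (c k l) z) z := by
      intro l hl
      have hcl : HasDerivAt (c k l) (deriv (c k l) z) z :=
        ((ihd l (by simpa using Nat.lt_succ_iff.mp (Finset.mem_range.mp hl))).differentiableAt
          (hW.mem_nhds hz)).hasDerivAt
      have hαz : HasDerivAt α (deriv α z) z := (hαat z hz).hasDerivAt
      have hpow : HasDerivAt (fun w => (α w + cconst) ^ (l + 1))
          ((l + 1 : ℕ) * (α z + cconst) ^ l * deriv α z) z := by
        simpa using (hαz.add_const cconst).fun_pow (l + 1)
      have hq := (hasDerivAt_const z ((-1 : ℂ) ^ (l + 1) * (Nat.factorial l : ℂ))).div hpow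
        (pow_ne_zero _ hnz)
      exact hq.mul hcl
    rw [(HasDerivAt.fun_sum hha).deriv]
    -- rewrite RHS using the recurrence and split the sum
    have hrhs : ∑ l ∈ Finset.range (k + 2),
        ((-1 : ℂ) ^ (l + 1) * (Nat.factorial l : ℂ) / (α z + cconst) ^ (l + 1))
          * c (k + 1) l z
        = ∑ l ∈ Finset.range (k + 1),
            (((-1 : ℂ) ^ (l + 1) * (Nat.factorial l : ℂ) / (α z + cconst) ^ (l + 1))
                * deriv (c k l) z
              + ((-1 : ℂ) ^ (l + 2) * (Nat.factorial (l + 1) : ℂ) / (α z + cconst) ^ (l + 2))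
                  * (deriv α z * c k l z)) := by
      have step1 : ∀ l ∈ Finset.range (k + 2),
          ((-1 : ℂ) ^ (l + 1) * (Nat.factorial l : ℂ) / (α z + cconst) ^ (l + 1))
            * c (k + 1) l z
          = ((-1 : ℂ) ^ (l + 1) * (Nat.factorial l : ℂ) / (α z + cconst) ^ (l + 1))
              * (if l ≤ k then deriv (c k l) z else 0)
            + ((-1 : ℂ) ^ (l + 1) * (Nat.factorial l : ℂ) / (α z + cconst) ^ (l + 1))
              * (deriv α z * (if l = 0 then 0 else c k (l - 1) z)) := by
        intro l hl
        rw [hB z hz l (Nat.lt_succ_iff.mp (Finset.mem_range.mp hl))]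
        simp only [hBdef]
        ring
      rw [Finset.sum_congr rfl step1, Finset.sum_add_distrib]
      have f1 : ∑ l ∈ Finset.range (k + 2),
          ((-1 : ℂ) ^ (l + 1) * (Nat.factorial l : ℂ) / (α z + cconst) ^ (l + 1))
            * (if l ≤ k then deriv (c k l) z else 0)
          = ∑ l ∈ Finset.range (k + 1),
              ((-1 : ℂ) ^ (l + 1) * (Nat.factorial l : ℂ) / (α z + cconst) ^ (l + 1))
                * deriv (c k l) z := by
        rw [Finset.sum_range_succ, if_neg (by omega : ¬ k + 1 ≤ k), mul_zero, add_zero]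
        refine Finset.sum_congr rfl fun l hl => ?_
        rw [if_pos (Nat.lt_succ_iff.mp (Finset.mem_range.mp hl))]
      have f2 : ∑ l ∈ Finset.range (k + 2),
          ((-1 : ℂ) ^ (l + 1) * (Nat.factorial l : ℂ) / (α z + cconst) ^ (l + 1))
            * (deriv α z * (if l = 0 then 0 else c k (l - 1) z))
          = ∑ l ∈ Finset.range (k + 1),
              ((-1 : ℂ) ^ (l + 2) * (Nat.factorial (l + 1) : ℂ) / (α z + cconst) ^ (l + 2))
                * (deriv α z * c k l z) := by
        rw [Finset.sum_range_succ']
        simp only [eq_self_iff_true, if_true, mul_zero, zero_mul, add_zero, pow_zero, mul_one,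
          Nat.succ_ne_zero, if_false, Nat.add_sub_cancel]
      rw [f1, f2, ← Finset.sum_add_distrib]
    rw [hrhs]
    refine Finset.sum_congr rfl fun l hl => ?_
    have hfac : (Nat.factorial (l + 1) : ℂ) = (l + 1 : ℂ) * (Nat.factorial l : ℂ) := by
      push_cast [Nat.factorial_succ]
      ring
    field_simp
    push_cast [hfac]
    ring
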